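/- Let n ≥ 2, q ∈ ℂ with q ≠ 0, let w be an involution in ISₙ, and let 1 ≤ i, j ≤ n − 1 with |j − i| > 1 be such that i, i+1 ∈ dom(w). Then C_{s_j}(T_i I_w) = T_i(C_{s_j} I_w) in V. -/

import Mathlib

open Equiv

/-- The symmetric inverse semigroup `ISₙ`: partial injective maps of `{0, …, n−1}`
(modelled as partial equivalences `Fin n ≃. Fin n`), under composition of partial
maps: `(x * y)(a) = x(y(a))`. -/
abbrev ISn (n : ℕ) : Type := PEquiv (Fin n) (Fin n)

noncomputable instance ISnMonoid (n : ℕ) : Monoid (ISn n) where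
  one := PEquiv.refl (Fin n)
  mul x y := y.trans x
  mul_assoc x y z := (PEquiv.trans_assoc z y x).symm
  one_mul x := PEquiv.trans_refl x
  mul_one x := PEquiv.refl_trans x

@[simp] theorem ISn.mul_def {n : ℕ} (x y : ISn n) : x * y = y.trans x := rfl
@[simp] theorem ISn.one_def {n : ℕ} : (1 : ISn n) = PEquiv.refl (Fin n) := rfl

/-- Involutions in `ISₙ`: elements mapping their domain bijectively to itself with
`w(w(a)) = a` for all `a` in the domain; equivalently, `w.symm = w`. -/
abbrev ISInv (n : ℕ) : Type := {w : ISn n // w.symm = w}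

/-- `V`: the complex vector space with basis `{I_w : w an involution in ISₙ}`. -/
abbrev VIS (n : ℕ) : Type := ISInv n →₀ ℂ

/-- Conjugation `x w x⁻¹` of an involution `w ∈ ISₙ` by an element `x ∈ ISₙ`
(as a partial map, `a ↦ x(w(x⁻¹(a)))`; when `dom(w) ⊆ dom(x)` this is the involution
with domain `x(dom(w))` sending `x(a) ↦ x(w(a))` for `a ∈ dom(w)`). -/
def conjIS {n : ℕ} (x : ISn n) (w : ISInv n) : ISInv n :=
  ⟨(x.symm.trans w.1).trans x, by
    rw [PEquiv.symm_trans_rev, PEquiv.symm_trans_rev, PEquiv.symm_symm, w.2,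
      PEquiv.trans_assoc]⟩

/-- Conjugation `π w π⁻¹` of an involution `w ∈ ISₙ` by a permutation `π ∈ Sₙ`:
the involution with domain `π(dom(w))` sending `π(a) ↦ π(w(a))` for `a ∈ dom(w)`. -/
def conjPermIS {n : ℕ} (π : Equiv.Perm (Fin n)) (w : ISInv n) : ISInv n :=
  conjIS π.toPEquiv w

/-- The operator `T_i` on `V`.  Indices are 0-based: the parameter `i` (with
`i + 1 < n`) corresponds to the pair of points `i, i+1` of `{0, …, n−1}` (that is,
to the 1-based index `i+1` of the paper), and `s_i` is the transposition swapping
them.  On a basis vector `I_w`: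
if `i, i+1 ∈ dom(w)` then `T_i I_w` is `q I_w` if `i, i+1 ∉ supp(w)`; `−I_w` if
`i, i+1 ∈ supp(w)`; `I_{s_i w s_i}` if `i ∈ supp(w)`, `i+1 ∉ supp(w)`;
`q I_{s_i w s_i} + (q−1) I_w` if `i ∉ supp(w)`, `i+1 ∈ supp(w)`.
If `i, i+1 ∉ dom(w)` then `T_i I_w = q I_w`.  If `i ∈ dom(w)`, `i+1 ∉ dom(w)` then
`T_i I_w = I_{s_i w s_i}`.  If `i ∉ dom(w)`, `i+1 ∈ dom(w)` then
`T_i I_w = q I_{s_i w s_i} + (q−1) I_w`. -/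
noncomputable def TIS (n : ℕ) (q : ℂ) (i : ℕ) (hi : i + 1 < n) : VIS n →ₗ[ℂ] VIS n :=
  Finsupp.lift (VIS n) ℂ (ISInv n) (fun w =>
    letI a : Fin n := ⟨i, Nat.lt_of_succ_lt hi⟩
    letI b : Fin n := ⟨i + 1, hi⟩
    letI s : Equiv.Perm (Fin n) := Equiv.swap a b
    if (w.1 a).isSome then
      if (w.1 b).isSome then
        -- both `i` and `i+1` lie in `dom(w)`
        if w.1 a = some a then
          if w.1 b = some b then q • Finsupp.single w (1 : ℂ)
          else q • Finsupp.single (conjPermIS s w) (1 : ℂ) +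
            (q - 1) • Finsupp.single w (1 : ℂ)
        else
          if w.1 b = some b then Finsupp.single (conjPermIS s w) (1 : ℂ)
          else - Finsupp.single w (1 : ℂ)
      else Finsupp.single (conjPermIS s w) (1 : ℂ)
    else
      if (w.1 b).isSome then
        q • Finsupp.single (conjPermIS s w) (1 : ℂ) + (q - 1) • Finsupp.single w (1 : ℂ)
      else q • Finsupp.single w (1 : ℂ))

/-- The operator `P_i` on `V`.  Indices are 0-based: the parameter `i` (with `i < n`)
corresponds to the 1-based index `i+1` of the paper, so that the paper's condition
`dom(w) ⊆ {i+1, …, n}` becomes: every `a ∈ dom(w)` satisfies `i < a`.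
On a basis vector: `P_i I_w = I_w` if `dom(w) ⊆ {i+1, …, n}`, and `P_i I_w = 0`
otherwise. -/
noncomputable def PIS (n : ℕ) (i : ℕ) : VIS n →ₗ[ℂ] VIS n :=
  Finsupp.lift (VIS n) ℂ (ISInv n) (fun w =>
    if ∀ a : Fin n, (w.1 a).isSome → i < (a : ℕ) then Finsupp.single w (1 : ℂ) else 0)

/-- The linear map `C_π : V → V` with `C_π(I_w) = I_{π w π⁻¹}`. -/
noncomputable def CIS (n : ℕ) (π : Equiv.Perm (Fin n)) : VIS n →ₗ[ℂ] VIS n :=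
  Finsupp.lift (VIS n) ℂ (ISInv n) (fun w => Finsupp.single (conjPermIS π w) (1 : ℂ))


lemma conjPermIS_apply {n : ℕ} (π : Equiv.Perm (Fin n)) (w : ISInv n) (a : Fin n) :
    (conjPermIS π w).1 a = (w.1 (π.symm a)).map π := by
  have h : (conjPermIS π w).1 a = ((π.toPEquiv.symm a).bind w.1).bind π.toPEquiv := rfl
  rw [h, ← Equiv.toPEquiv_symm, Equiv.toPEquiv_apply, Option.bind_some]
  cases w.1 (π.symm a) <;> simp [Equiv.toPEquiv_apply]

lemma conjPermIS_mul {n : ℕ} (π σ : Equiv.Perm (Fin n)) (w : ISInv n) :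
    conjPermIS π (conjPermIS σ w) = conjPermIS (π * σ) w := by
  apply Subtype.ext
  show (π.toPEquiv.symm.trans (((σ.toPEquiv.symm.trans w.1).trans σ.toPEquiv))).trans π.toPEquiv
    = ((π * σ).toPEquiv.symm.trans w.1).trans (π * σ).toPEquiv
  have h1 : (π * σ).toPEquiv = σ.toPEquiv.trans π.toPEquiv := Equiv.toPEquiv_trans σ π
  rw [h1, PEquiv.symm_trans_rev]
  simp only [PEquiv.trans_assoc]

lemma swap_mul_swap_comm' {α : Type*} [DecidableEq α] {a b c d : α}
    (hac : a ≠ c) (had : a ≠ d) (hbc : b ≠ c) (hbd : b ≠ d) :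
    Equiv.swap a b * Equiv.swap c d = Equiv.swap c d * Equiv.swap a b := by
  apply Equiv.ext; intro x
  simp only [Equiv.Perm.mul_apply]
  rcases eq_or_ne x a with rfl | hxa
  · rw [Equiv.swap_apply_of_ne_of_ne hac had, Equiv.swap_apply_left,
      Equiv.swap_apply_of_ne_of_ne hbc hbd]
  rcases eq_or_ne x b with rfl | hxb
  · rw [Equiv.swap_apply_of_ne_of_ne hbc hbd, Equiv.swap_apply_right,
      Equiv.swap_apply_of_ne_of_ne hac had]
  rcases eq_or_ne x c with rfl | hxc
  · rw [Equiv.swap_apply_left, Equiv.swap_apply_of_ne_of_ne had.symm hbd.symm,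
      Equiv.swap_apply_of_ne_of_ne hac.symm hbc.symm, Equiv.swap_apply_left]
  rcases eq_or_ne x d with rfl | hxd
  · rw [Equiv.swap_apply_right, Equiv.swap_apply_of_ne_of_ne hac.symm hbc.symm,
      Equiv.swap_apply_of_ne_of_ne had.symm hbd.symm, Equiv.swap_apply_right]
  · simp [Equiv.swap_apply_of_ne_of_ne hxa hxb, Equiv.swap_apply_of_ne_of_ne hxc hxd]

lemma CIS_single {n : ℕ} (π : Equiv.Perm (Fin n)) (w : ISInv n) (r : ℂ) :
    CIS n π (Finsupp.single w r) = Finsupp.single (conjPermIS π w) r := by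
  rw [CIS, Finsupp.lift_apply]
  rw [Finsupp.sum_single_index]
  · rw [Finsupp.smul_single, smul_eq_mul, mul_one]
  · exact zero_smul ℂ _

lemma TIS_single (n : ℕ) (q : ℂ) (i : ℕ) (hi : i + 1 < n) (w : ISInv n) :
    TIS n q i hi (Finsupp.single w (1 : ℂ)) =
    (letI a : Fin n := ⟨i, Nat.lt_of_succ_lt hi⟩
    letI b : Fin n := ⟨i + 1, hi⟩
    letI s : Equiv.Perm (Fin n) := Equiv.swap a b
    if (w.1 a).isSome then
      if (w.1 b).isSome then
        if w.1 a = some a then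
          if w.1 b = some b then q • Finsupp.single w (1 : ℂ)
          else q • Finsupp.single (conjPermIS s w) (1 : ℂ) +
            (q - 1) • Finsupp.single w (1 : ℂ)
        else
          if w.1 b = some b then Finsupp.single (conjPermIS s w) (1 : ℂ)
          else - Finsupp.single w (1 : ℂ)
      else Finsupp.single (conjPermIS s w) (1 : ℂ)
    else
      if (w.1 b).isSome then
        q • Finsupp.single (conjPermIS s w) (1 : ℂ) + (q - 1) • Finsupp.single w (1 : ℂ)
      else q • Finsupp.single w (1 : ℂ)) := by
  rw [TIS, Finsupp.lift_apply]
  rw [Finsupp.sum_single_index]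
  · rw [one_smul]
  · exact zero_smul ℂ _

/-- If `i, i+1 ∈ dom(w)` and `|j − i| > 1` (0-based indices `i, j` with `i + 1 < n`,
`j + 1 < n`, corresponding to the paper's 1-based `1 ≤ i, j ≤ n − 1`), then
`C_{s_j}(T_i I_w) = T_i(C_{s_j} I_w)`, where `s_j` is the transposition `(j, j+1)`. -/
theorem CIS_swap_TIS_comm (n : ℕ) (hn : 2 ≤ n) (q : ℂ) (hq : q ≠ 0) (i j : ℕ)
    (hi : i + 1 < n) (hj : j + 1 < n) (hij : i + 1 < j ∨ j + 1 < i)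
    (w : ISInv n)
    (hdom : (w.1 ⟨i, by omega⟩).isSome ∧ (w.1 ⟨i + 1, hi⟩).isSome) :
    CIS n (Equiv.swap ⟨j, by omega⟩ ⟨j + 1, hj⟩) (TIS n q i hi (Finsupp.single w (1 : ℂ))) =
      TIS n q i hi (CIS n (Equiv.swap ⟨j, by omega⟩ ⟨j + 1, hj⟩)
        (Finsupp.single w (1 : ℂ))) := by
  set a : Fin n := ⟨i, by omega⟩ with ha
  set b : Fin n := ⟨i + 1, hi⟩ with hb
  set c : Fin n := ⟨j, by omega⟩ with hc
  set d : Fin n := ⟨j + 1, hj⟩ with hd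
  set π : Equiv.Perm (Fin n) := Equiv.swap c d with hπ
  set s : Equiv.Perm (Fin n) := Equiv.swap a b with hs
  have hac : a ≠ c := by simp only [ha, hc, ne_eq, Fin.mk.injEq]; omega
  have had : a ≠ d := by simp only [ha, hd, ne_eq, Fin.mk.injEq]; omega
  have hbc : b ≠ c := by simp only [hb, hc, ne_eq, Fin.mk.injEq]; omega
  have hbd : b ≠ d := by simp only [hb, hd, ne_eq, Fin.mk.injEq]; omega
  have hπa : π.symm a = a := by
    rw [hπ, Equiv.symm_swap, Equiv.swap_apply_of_ne_of_ne hac had]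
  have hπb : π.symm b = b := by
    rw [hπ, Equiv.symm_swap, Equiv.swap_apply_of_ne_of_ne hbc hbd]
  have hπa' : π a = a := Equiv.swap_apply_of_ne_of_ne hac had
  have hπb' : π b = b := Equiv.swap_apply_of_ne_of_ne hbc hbd
  have hA : ((conjPermIS π w).1 a).isSome = (w.1 a).isSome := by
    rw [conjPermIS_apply, hπa]; cases w.1 a <;> rfl
  have hB : ((conjPermIS π w).1 b).isSome = (w.1 b).isSome := by
    rw [conjPermIS_apply, hπb]; cases w.1 b <;> rfl
  have hA' : ((conjPermIS π w).1 a = some a) ↔ (w.1 a = some a) := by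
    rw [conjPermIS_apply, hπa]
    cases w.1 a with
    | none => simp
    | some y =>
      simp only [Option.map_some, Option.some.injEq]
      exact ⟨fun h' => π.injective (h'.trans hπa'.symm), fun h' => h' ▸ hπa'⟩
  have hB' : ((conjPermIS π w).1 b = some b) ↔ (w.1 b = some b) := by
    rw [conjPermIS_apply, hπb]
    cases w.1 b with
    | none => simp
    | some y =>
      simp only [Option.map_some, Option.some.injEq]
      exact ⟨fun h' => π.injective (h'.trans hπb'.symm), fun h' => h' ▸ hπb'⟩
  have hcomm : conjPermIS π (conjPermIS s w) = conjPermIS s (conjPermIS π w) := by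
    rw [conjPermIS_mul, conjPermIS_mul, hπ, hs,
      swap_mul_swap_comm' hac.symm hbc.symm had.symm hbd.symm]
  rw [CIS_single, TIS_single, TIS_single]
  rw [← ha, ← hb, ← hs]
  simp only [hA, hB, hA', hB']
  split_ifs <;>
    simp [map_add, map_smul, map_neg, CIS_single, hcomm]
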